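/- For all integers m ≥ 0, the Boros-Moll polynomial satisfies the double-sum/single-sum identity: ∑_{j,k} C(2m+1, 2j)·C(m−j, k)·C(2k+2j, k+j)·(a+1)^j(a−1)^k / 2^{3(k+j)} = 2^{-2m} ∑_{k=0}^{m} 2^k·C(2m−2k, m−k)·C(m+k, k)·(a+1)^k, as polynomials in the variable a. -/

import Mathlib

open Finset Polynomial

lemma sum_range_two_mul (M : ℕ) (g : ℕ → ℝ) :
    ∑ i ∈ range (2*M), g i = ∑ j ∈ range M, (g (2*j) + g (2*j+1)) := by
  induction M with
  | zero => simp
  | succ M ih =>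
      have : 2*(M+1) = (2*M+1)+1 := by ring
      rw [this, sum_range_succ, sum_range_succ, sum_range_succ, ih]
      ring

lemma even_part (m : ℕ) (u v : ℝ) :
    2 * ∑ j ∈ range (m+1), (Nat.choose (2*m+1) (2*j) : ℝ) * v^(2*j) * u^(2*m+1-2*j)
      = (u+v)^(2*m+1) + (u-v)^(2*m+1) := by
  have h1 : (u+v)^(2*m+1) = ∑ i ∈ range (2*m+1+1), v^i * u^(2*m+1-i) * ((2*m+1).choose i : ℝ) := by
    rw [add_comm u v, add_pow]
  have h2 : (u-v)^(2*m+1) = ∑ i ∈ range (2*m+1+1), (-v)^i * u^(2*m+1-i) * ((2*m+1).choose i : ℝ) := by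
    rw [sub_eq_add_neg, add_comm u (-v), add_pow]
  have h3 : (2*m+1+1) = 2*(m+1) := by ring
  rw [h1, h2, ← sum_add_distrib, h3, sum_range_two_mul]
  rw [Finset.mul_sum]
  apply Finset.sum_congr rfl
  intro j hj
  have hje : (-v)^(2*j) = v^(2*j) := by
    rw [pow_mul, pow_mul, neg_sq]
  have hjo : (-v)^(2*j+1) = -(v^(2*j+1)) := by
    rw [pow_succ, pow_succ, hje]; ring
  rw [hje, hjo]
  ring

noncomputable def Rs (m : ℕ) (s : ℝ) : ℝ :=
  ∑ n ∈ range (m+1), ((m+n).choose (2*n) : ℝ) * (s-1)^(2*n) * s^(m-n)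

noncomputable def Us (m : ℕ) (s : ℝ) : ℝ :=
  ∑ n ∈ range (m+1), ((m+1+n).choose (2*n+1) : ℝ) * (s-1)^(2*n+1) * s^(m-n)

lemma Rrec (m : ℕ) (s : ℝ) : Rs (m+1) s = s * Rs m s + (s-1) * Us m s := by
  have key : Rs (m+1) s
      = (∑ t ∈ range (m+1), ((m+1+(t+1)).choose (2*(t+1)) : ℝ) * (s-1)^(2*(t+1)) * s^(m-t))
        + s^(m+1) := by
    rw [Rs, sum_range_succ']
    simp only [Nat.add_sub_cancel, Nat.succ_sub_succ]
    norm_num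
  have pasc : ∀ t : ℕ, ((m+1+(t+1)).choose (2*(t+1)) : ℝ)
      = ((m+1+t).choose (2*t+1) : ℝ) + ((m+1+t).choose (2*t+2) : ℝ) := by
    intro t
    have : (m+1+(t+1)) = (m+1+t)+1 := by ring
    rw [this, show 2*(t+1) = (2*t+1)+1 from by ring, Nat.choose_succ_succ]
    push_cast; ring
  have split : ∑ t ∈ range (m+1), ((m+1+(t+1)).choose (2*(t+1)) : ℝ) * (s-1)^(2*(t+1)) * s^(m-t)
      = (∑ t ∈ range (m+1), ((m+1+t).choose (2*t+1) : ℝ) * (s-1)^(2*(t+1)) * s^(m-t))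
        + ∑ t ∈ range (m+1), ((m+1+t).choose (2*t+2) : ℝ) * (s-1)^(2*(t+1)) * s^(m-t) := by
    rw [← sum_add_distrib]
    apply sum_congr rfl; intro t _
    rw [pasc t]; ring
  have part1 : ∑ t ∈ range (m+1), ((m+1+t).choose (2*t+1) : ℝ) * (s-1)^(2*(t+1)) * s^(m-t)
      = (s-1) * Us m s := by
    rw [Us, Finset.mul_sum]
    apply sum_congr rfl; intro t _
    rw [show 2*(t+1) = (2*t+1)+1 from by ring, pow_succ]
    ring
  have part2 : ∑ t ∈ range (m+1), ((m+1+t).choose (2*t+2) : ℝ) * (s-1)^(2*(t+1)) * s^(m-t)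
      = s * Rs m s - s^(m+1) := by
    have hR : s * Rs m s
        = (∑ t ∈ range m, ((m+(t+1)).choose (2*(t+1)) : ℝ) * (s-1)^(2*(t+1)) * s^(m-(t+1)) * s)
          + s^m * s := by
      rw [Rs, Finset.mul_sum, sum_range_succ']
      simp only [Nat.sub_zero, mul_zero, pow_zero, Nat.choose_zero_right, Nat.cast_one]
      congr 1
      · apply sum_congr rfl; intro t _; ring
      · ring
    have last0 : ((m+(m+1)).choose (2*(m+1)) : ℝ) = 0 := by
      rw [Nat.choose_eq_zero_of_lt (by omega)]; norm_num
    rw [sum_range_succ, hR]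
    have congr1 : ∀ t ∈ range m,
        ((m+(t+1)).choose (2*(t+1)) : ℝ) * (s-1)^(2*(t+1)) * s^(m-(t+1)) * s
          = ((m+1+t).choose (2*t+2) : ℝ) * (s-1)^(2*(t+1)) * s^(m-t) := by
      intro t ht
      rw [mem_range] at ht
      have h1 : m+(t+1) = m+1+t := by ring
      have h2 : 2*(t+1) = 2*t+2 := by ring
      have h3 : s^(m-(t+1)) * s = s^(m-t) := by
        rw [← pow_succ]
        congr 1; omega
      rw [h1, h2, mul_assoc, mul_assoc, h3]
      ring
    rw [show m+1+m = m+(m+1) from by ring, show 2*m+2 = 2*(m+1) from by ring, last0]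
    rw [← Finset.sum_congr rfl congr1]
    ring
  rw [key, split, part1, part2]
  ring

lemma Urec (m : ℕ) (s : ℝ) : Us (m+1) s = s * Us m s + (s-1) * Rs (m+1) s := by
  have pasc : ∀ n : ℕ, ((m+1+1+n).choose (2*n+1) : ℝ)
      = ((m+1+n).choose (2*n) : ℝ) + ((m+1+n).choose (2*n+1) : ℝ) := by
    intro n
    rw [show m+1+1+n = (m+1+n)+1 from by ring, show (2*n+1) = (2*n)+1 from rfl,
      Nat.choose_succ_succ]
    push_cast; ring
  have split : Us (m+1) s
      = (∑ n ∈ range (m+2), ((m+1+n).choose (2*n) : ℝ) * (s-1)^(2*n+1) * s^(m+1-n))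
        + ∑ n ∈ range (m+2), ((m+1+n).choose (2*n+1) : ℝ) * (s-1)^(2*n+1) * s^(m+1-n) := by
    rw [Us, ← sum_add_distrib]
    apply sum_congr rfl; intro n _
    rw [pasc n]; ring
  have part1 : ∑ n ∈ range (m+2), ((m+1+n).choose (2*n) : ℝ) * (s-1)^(2*n+1) * s^(m+1-n)
      = (s-1) * Rs (m+1) s := by
    rw [Rs, Finset.mul_sum]
    apply sum_congr rfl; intro n _
    rw [pow_succ]
    ring
  have part2 : ∑ n ∈ range (m+2), ((m+1+n).choose (2*n+1) : ℝ) * (s-1)^(2*n+1) * s^(m+1-n)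
      = s * Us m s := by
    rw [sum_range_succ]
    have last0 : ((m+1+(m+1)).choose (2*(m+1)+1) : ℝ) = 0 := by
      rw [Nat.choose_eq_zero_of_lt (by omega)]; norm_num
    rw [last0, Us, Finset.mul_sum]
    have congr1 : ∀ n ∈ range (m+1),
        ((m+1+n).choose (2*n+1) : ℝ) * (s-1)^(2*n+1) * s^(m+1-n)
          = s * (((m+1+n).choose (2*n+1) : ℝ) * (s-1)^(2*n+1) * s^(m-n)) := by
      intro n hn
      rw [mem_range] at hn
      have h3 : s^(m+1-n) = s * s^(m-n) := by
        rw [← pow_succ']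
        congr 1; omega
      rw [h3]; ring
    rw [Finset.sum_congr rfl congr1]
    ring
  rw [split, part1, part2]
  ring

lemma RUval (m : ℕ) (s : ℝ) :
    (s+1) * Rs m s = s^(2*m+1) + 1 ∧ (s+1) * Us m s = s^(2*m+2) - 1 := by
  induction m with
  | zero =>
      constructor
      · simp [Rs]
      · simp [Us, Nat.choose_one_right]; ring
  | succ m ih =>
      obtain ⟨hR, hU⟩ := ih
      have hR1 : (s+1) * Rs (m+1) s = s^(2*(m+1)+1) + 1 := by
        rw [Rrec]
        have : (s+1) * (s * Rs m s + (s-1) * Us m s)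
            = s * ((s+1) * Rs m s) + (s-1) * ((s+1) * Us m s) := by ring
        rw [this, hR, hU, show 2*(m+1)+1 = (2*m+2)+1 from by ring,
          show 2*m+2 = (2*m+1)+1 from rfl]
        ring
      refine ⟨hR1, ?_⟩
      rw [Urec]
      have : (s+1) * (s * Us m s + (s-1) * Rs (m+1) s)
          = s * ((s+1) * Us m s) + (s-1) * ((s+1) * Rs (m+1) s) := by ring
      rw [this, hU, hR1, show 2*(m+1)+2 = (2*m+2)+2 from by ring,
        show 2*(m+1)+1 = (2*m+2)+1 from by ring, show 2*m+2 = (2*m+1)+1 from rfl]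
      ring

noncomputable def P1 (m : ℕ) : Polynomial ℝ :=
  ∑ j ∈ range (m+1), Polynomial.C (((2*m+1).choose (2*j) : ℝ)) * (Polynomial.X^j * (1 + Polynomial.X)^(m-j))

noncomputable def P2 (m : ℕ) : Polynomial ℝ :=
  ∑ n ∈ range (m+1), Polynomial.C ((4:ℝ)^n * ((m+n).choose (2*n) : ℝ)) * Polynomial.X^n

lemma RUval1 (m : ℕ) (s : ℝ) : (s+1) * Rs m s = s^(2*m+1) + 1 := (RUval m s).1

lemma evalP1P2 (m : ℕ) (x : ℝ) (hx : 0 ≤ x) : (P1 m).eval x = (P2 m).eval x := by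
  set u := Real.sqrt x with hudef
  set v := Real.sqrt (x+1) with hvdef
  have hu : u^2 = x := Real.sq_sqrt hx
  have hv : v^2 = x+1 := Real.sq_sqrt (by linarith)
  have hu0 : 0 ≤ u := Real.sqrt_nonneg _
  have hv0 : 0 ≤ v := Real.sqrt_nonneg _
  set s := (u+v)^2 with hsdef
  have hs1 : 1 ≤ s := by nlinarith
  have hs0 : 0 < s := by linarith
  have hx4 : 4*s*x = (s-1)^2 := by
    rw [hsdef]
    linear_combination (-4*(u+v)^2 + (2*u*(u+v)+(u+v)^2-1))*hu - (2*u*(u+v)+(u+v)^2-1)*hv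
  have hx4' : 4*s*(x+1) = (s+1)^2 := by
    rw [hsdef]
    linear_combination (-(2*v*(u+v)+(u+v)^2+1))*hu + (-4*(u+v)^2 + 2*v*(u+v)+(u+v)^2+1)*hv
  -- evaluation of P1
  have eP1 : (P1 m).eval x = ∑ j ∈ range (m+1),
      ((2*m+1).choose (2*j) : ℝ) * (x^j * (1+x)^(m-j)) := by
    simp [P1, eval_finset_sum]
  have eP2 : (P2 m).eval x = ∑ n ∈ range (m+1),
      (4:ℝ)^n * ((m+n).choose (2*n) : ℝ) * x^n := by
    simp [P2, eval_finset_sum]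
  have key1 : (s+1) * ((4*s)^m * (P1 m).eval x) = (4:ℝ)^m * (s^(2*m+1) + 1) := by
    rw [eP1, Finset.mul_sum, Finset.mul_sum]
    have step : ∀ j ∈ range (m+1),
        (s+1) * ((4*s)^m * (((2*m+1).choose (2*j) : ℝ) * (x^j * (1+x)^(m-j))))
        = ((2*m+1).choose (2*j) : ℝ) * (s-1)^(2*j) * (s+1)^(2*m+1-2*j) := by
      intro j hj
      rw [mem_range] at hj
      have hjm : j ≤ m := by omega
      have e1 : (4*s)^m = (4*s)^j * (4*s)^(m-j) := by
        rw [← pow_add]; congr 1; omega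
      have e2 : (4*s)^j * x^j = ((s-1)^2)^j := by
        rw [← mul_pow, hx4]
      have e3 : (4*s)^(m-j) * (1+x)^(m-j) = ((s+1)^2)^(m-j) := by
        rw [← mul_pow]
        congr 1
        rw [← hx4']; ring
      have e4 : (2*m+1-2*j) = 2*(m-j)+1 := by omega
      calc (s+1) * ((4*s)^m * (((2*m+1).choose (2*j) : ℝ) * (x^j * (1+x)^(m-j))))
          = ((2*m+1).choose (2*j) : ℝ) * ((4*s)^j * x^j) * (((4*s)^(m-j) * (1+x)^(m-j)) * (s+1)) := by
            rw [e1]; ring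
        _ = ((2*m+1).choose (2*j) : ℝ) * (s-1)^(2*j) * (s+1)^(2*m+1-2*j) := by
            rw [e2, e3, e4, ← pow_mul, ← pow_mul, pow_succ]
    rw [Finset.sum_congr rfl step]
    have := even_part m (s+1) (s-1)
    have harr : (s+1+(s-1)) = 2*s ∧ (s+1-(s-1)) = 2 := by constructor <;> ring
    rw [harr.1, harr.2] at this
    have : ∑ j ∈ range (m+1), ((2*m+1).choose (2*j) : ℝ) * (s-1)^(2*j) * (s+1)^(2*m+1-2*j)
        = ((2*s)^(2*m+1) + 2^(2*m+1))/2 := by linarith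
    rw [this, mul_pow]
    rw [show (2:ℝ)^(2*m+1) = 2*4^m by rw [pow_succ, pow_mul]; norm_num [mul_comm]]
    ring
  have key2 : (s+1) * (s^m * (P2 m).eval x) = s^(2*m+1) + 1 := by
    rw [eP2, Finset.mul_sum, Finset.mul_sum]
    have step : ∀ n ∈ range (m+1),
        (s+1) * (s^m * ((4:ℝ)^n * ((m+n).choose (2*n) : ℝ) * x^n))
        = (s+1) * (((m+n).choose (2*n) : ℝ) * (s-1)^(2*n) * s^(m-n)) := by
      intro n hn
      rw [mem_range] at hn
      have e1 : s^m = s^n * s^(m-n) := by rw [← pow_add]; congr 1; omega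
      have e2 : (4:ℝ)^n * s^n * x^n = ((s-1)^2)^n := by
        rw [← mul_pow, ← mul_pow, hx4]
      calc (s+1) * (s^m * ((4:ℝ)^n * ((m+n).choose (2*n) : ℝ) * x^n))
          = (s+1) * (((m+n).choose (2*n) : ℝ) * ((4:ℝ)^n * s^n * x^n) * s^(m-n)) := by
            rw [e1]; ring
        _ = (s+1) * (((m+n).choose (2*n) : ℝ) * (s-1)^(2*n) * s^(m-n)) := by
            rw [e2, ← pow_mul]
    rw [Finset.sum_congr rfl step, ← Finset.mul_sum]
    have hR : (s+1) * Rs m s = s^(2*m+1) + 1 := RUval1 m s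
    rw [Rs] at hR
    linarith [hR]
  -- conclude
  have h4m : (0:ℝ) < 4^m * s^m := by positivity
  have : (4:ℝ)^m * ((s+1) * (s^m * (P2 m).eval x)) = (4:ℝ)^m * (s^(2*m+1)+1) := by rw [key2]
  rw [← this] at key1
  have hsp1 : (0:ℝ) < s + 1 := by linarith
  have expand : (s+1) * ((4*s)^m * (P1 m).eval x) = (s+1) * (4^m * s^m) * (P1 m).eval x := by
    rw [mul_pow]; ring
  have expand2 : (4:ℝ)^m * ((s+1) * (s^m * (P2 m).eval x)) = (s+1) * (4^m * s^m) * (P2 m).eval x := by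
    ring
  rw [expand, expand2] at key1
  have hne : (s+1) * ((4:ℝ)^m * s^m) ≠ 0 := by positivity
  exact mul_left_cancel₀ hne key1

lemma P1eqP2 (m : ℕ) : P1 m = P2 m := by
  apply Polynomial.eq_of_infinite_eval_eq
  apply Set.Infinite.mono (s := Set.Ici (0:ℝ))
  · intro x hx
    exact evalP1P2 m x hx
  · exact Set.Ici_infinite 0

lemma lemA (m n : ℕ) (h : n ≤ m) :
    ∑ j ∈ range (n+1), ((2*m+1).choose (2*j) : ℝ) * ((m-j).choose (n-j) : ℝ)
      = 4^n * ((m+n).choose (2*n) : ℝ) := by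
  have hco := congrArg (fun p => Polynomial.coeff p n) (P1eqP2 m)
  simp only [P1, P2, Polynomial.finset_sum_coeff] at hco
  have lhs_eq : ∑ j ∈ range (m+1),
      (Polynomial.C (((2*m+1).choose (2*j) : ℝ)) * (Polynomial.X^j * (1 + Polynomial.X)^(m-j))).coeff n
      = ∑ j ∈ range (n+1), ((2*m+1).choose (2*j) : ℝ) * ((m-j).choose (n-j) : ℝ) := by
    have h1 : ∑ j ∈ range (m+1),
        (Polynomial.C (((2*m+1).choose (2*j) : ℝ)) * (Polynomial.X^j * (1 + Polynomial.X)^(m-j))).coeff n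
        = ∑ j ∈ range (n+1),
        (Polynomial.C (((2*m+1).choose (2*j) : ℝ)) * (Polynomial.X^j * (1 + Polynomial.X)^(m-j))).coeff n := by
      refine (Finset.sum_subset (Finset.range_subset_range.2 (by omega : n+1 ≤ m+1)) ?_).symm
      intro j hj1 hj2
      rw [mem_range] at hj1; rw [mem_range] at hj2
      rw [Polynomial.coeff_C_mul, Polynomial.coeff_X_pow_mul', if_neg (by omega), mul_zero]
    rw [h1]
    apply sum_congr rfl
    intro j hj
    rw [mem_range] at hj
    rw [Polynomial.coeff_C_mul, Polynomial.coeff_X_pow_mul', if_pos (by omega : j ≤ n),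
      Polynomial.coeff_one_add_X_pow]
  have rhs_eq : ∑ k ∈ range (m+1),
      (Polynomial.C ((4:ℝ)^k * ((m+k).choose (2*k) : ℝ)) * Polynomial.X^k).coeff n
      = 4^n * ((m+n).choose (2*n) : ℝ) := by
    rw [Finset.sum_eq_single n]
    · rw [Polynomial.coeff_C_mul, Polynomial.coeff_X_pow, if_pos rfl, mul_one]
    · intro k _ hkn
      rw [Polynomial.coeff_C_mul, Polynomial.coeff_X_pow, if_neg (fun hh => hkn hh.symm), mul_zero]
    · intro hnot
      exact absurd (mem_range.2 (by omega)) hnot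
  rw [lhs_eq, rhs_eq] at hco
  exact hco

noncomputable def Iq (p q : ℕ) : ℝ :=
  ∑ t ∈ range (p+1), (p.choose t : ℝ) * (-1)^t * (4:ℝ)⁻¹^t * ((2*t+2*q).choose (t+q) : ℝ)

lemma Irec (p q : ℕ) : Iq (p+1) q = Iq p q - (1/4) * Iq p (q+1) := by
  have hsum : Iq (p+1) q
      = (∑ t ∈ range (p+1), ((p+1).choose (t+1) : ℝ) * (-1)^(t+1) * (4:ℝ)⁻¹^(t+1)
          * ((2*(t+1)+2*q).choose ((t+1)+q) : ℝ)) + ((2*q).choose q : ℝ) := by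
    rw [Iq, sum_range_succ']
    norm_num
  have pasc : ∀ t : ℕ, ((p+1).choose (t+1) : ℝ) = (p.choose t : ℝ) + (p.choose (t+1) : ℝ) := by
    intro t; rw [Nat.choose_succ_succ]; push_cast; ring
  have split : ∑ t ∈ range (p+1), ((p+1).choose (t+1) : ℝ) * (-1)^(t+1) * (4:ℝ)⁻¹^(t+1)
          * ((2*(t+1)+2*q).choose ((t+1)+q) : ℝ)
      = (∑ t ∈ range (p+1), (p.choose t : ℝ) * (-1)^(t+1) * (4:ℝ)⁻¹^(t+1)
          * ((2*(t+1)+2*q).choose ((t+1)+q) : ℝ))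
        + ∑ t ∈ range (p+1), (p.choose (t+1) : ℝ) * (-1)^(t+1) * (4:ℝ)⁻¹^(t+1)
          * ((2*(t+1)+2*q).choose ((t+1)+q) : ℝ) := by
    rw [← sum_add_distrib]
    apply sum_congr rfl; intro t _; rw [pasc t]; ring
  have part1 : ∑ t ∈ range (p+1), (p.choose t : ℝ) * (-1)^(t+1) * (4:ℝ)⁻¹^(t+1)
          * ((2*(t+1)+2*q).choose ((t+1)+q) : ℝ)
      = -(1/4) * Iq p (q+1) := by
    rw [Iq, Finset.mul_sum]
    apply sum_congr rfl; intro t _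
    have e1 : 2*(t+1)+2*q = 2*t+2*(q+1) := by omega
    have e2 : (t+1)+q = t+(q+1) := by omega
    rw [e1, e2, pow_succ, pow_succ]
    ring
  have part2 : ∑ t ∈ range (p+1), (p.choose (t+1) : ℝ) * (-1)^(t+1) * (4:ℝ)⁻¹^(t+1)
          * ((2*(t+1)+2*q).choose ((t+1)+q) : ℝ)
      = Iq p q - ((2*q).choose q : ℝ) := by
    have h := sum_range_succ' (fun t => (p.choose t : ℝ) * (-1)^t * (4:ℝ)⁻¹^t
        * ((2*t+2*q).choose (t+q) : ℝ)) (p+1)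
    have hfull : ∑ t ∈ range (p+1+1), (p.choose t : ℝ) * (-1)^t * (4:ℝ)⁻¹^t
        * ((2*t+2*q).choose (t+q) : ℝ) = Iq p q := by
      rw [sum_range_succ, Iq]
      rw [Nat.choose_eq_zero_of_lt (by omega : p < p+1)]
      norm_num
    rw [hfull] at h
    have h0 : ((p.choose 0 : ℝ) * (-1)^0 * (4:ℝ)⁻¹^0 * ((2*0+2*q).choose (0+q) : ℝ))
        = ((2*q).choose q : ℝ) := by norm_num
    rw [h0] at h
    linarith [h]
  rw [hsum, split, part1, part2]
  ring

lemma lemB (p q : ℕ) :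
    Iq p q = ((2*p).choose p : ℝ) * ((2*q).choose q : ℝ) / (4^p * ((p+q).choose p : ℝ)) := by
  induction p generalizing q with
  | zero => simp [Iq]
  | succ p ih =>
      rw [Irec, ih q, ih (q+1)]
      have hp1 : ((p:ℝ)+1) ≠ 0 := by positivity
      have hq1 : ((q:ℝ)+1) ≠ 0 := by positivity
      have hpq1 : ((p:ℝ)+(q:ℝ)+1) ≠ 0 := by positivity
      have hc : (((p+q).choose p : ℕ):ℝ) ≠ 0 := by
        have := Nat.choose_pos (show p ≤ p+q by omega)
        positivity
      have h4 : ((4:ℝ)^p) ≠ 0 := by positivity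
      -- relations
      have c1 : ((2*p+1):ℝ) * ((2*p).choose p : ℝ) = ((2*p+1).choose (p+1) : ℝ) * ((p:ℝ)+1) := by
        exact_mod_cast congrArg (Nat.cast : ℕ → ℝ) (Nat.add_one_mul_choose_eq (2*p) p)
      have ns : (2*p+1).choose p = (2*p+1).choose (p+1) := by
        rw [← Nat.choose_symm (by omega : p ≤ 2*p+1)]
        congr 1; omega
      have c2 : ((2*p+2):ℝ) * ((2*p+1).choose (p+1) : ℝ) = ((2*p+2).choose (p+1) : ℝ) * ((p:ℝ)+1) := by
        have := congrArg (Nat.cast : ℕ → ℝ) (Nat.add_one_mul_choose_eq (2*p+1) p)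
        rw [ns] at this
        exact_mod_cast this
      have hA2 : ((2*p+2).choose (p+1) : ℝ) * ((p:ℝ)+1) = 2*(2*(p:ℝ)+1)*((2*p).choose p : ℝ) := by
        linear_combination (-1:ℝ)*c2 - 2*c1
      have d1 : ((2*q+1):ℝ) * ((2*q).choose q : ℝ) = ((2*q+1).choose (q+1) : ℝ) * ((q:ℝ)+1) := by
        exact_mod_cast congrArg (Nat.cast : ℕ → ℝ) (Nat.add_one_mul_choose_eq (2*q) q)
      have ns' : (2*q+1).choose q = (2*q+1).choose (q+1) := by
        rw [← Nat.choose_symm (by omega : q ≤ 2*q+1)]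
        congr 1; omega
      have d2 : ((2*q+2):ℝ) * ((2*q+1).choose (q+1) : ℝ) = ((2*q+2).choose (q+1) : ℝ) * ((q:ℝ)+1) := by
        have := congrArg (Nat.cast : ℕ → ℝ) (Nat.add_one_mul_choose_eq (2*q+1) q)
        rw [ns'] at this
        exact_mod_cast this
      have hB2 : ((2*q+2).choose (q+1) : ℝ) * ((q:ℝ)+1) = 2*(2*(q:ℝ)+1)*((2*q).choose q : ℝ) := by
        linear_combination (-1:ℝ)*d2 - 2*d1
      have hC1 : ((p+q+1).choose (p+1) : ℝ) * ((p:ℝ)+1) = ((p:ℝ)+(q:ℝ)+1)*((p+q).choose p : ℝ) := by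
        have := congrArg (Nat.cast : ℕ → ℝ) (Nat.add_one_mul_choose_eq (p+q) p)
        push_cast at this ⊢
        linarith [this]
      have hC2 : ((p+q+1).choose p : ℝ) * ((q:ℝ)+1) = ((p:ℝ)+(q:ℝ)+1)*((p+q).choose p : ℝ) := by
        have h1 := congrArg (Nat.cast : ℕ → ℝ) (Nat.add_one_mul_choose_eq (p+q) q)
        have e1 : (p+q).choose q = (p+q).choose p := by
          rw [← Nat.choose_symm (by omega : p ≤ p+q)]
          congr 1; omega
        have e2 : (p+q+1).choose (q+1) = (p+q+1).choose p := by
          rw [← Nat.choose_symm (by omega : p ≤ p+q+1)]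
          congr 1; omega
        rw [e1, e2] at h1
        push_cast at h1 ⊢
        linarith [h1]
      -- normalize goal args
      have g1 : 2*(p+1) = 2*p+2 := by ring
      have g2 : p+1+q = p+q+1 := by ring
      have g3 : 2*(q+1) = 2*q+2 := by ring
      have g4 : p+(q+1) = p+q+1 := by ring
      rw [g1, g2, g3, g4]
      have hA'd : ((2*p+2).choose (p+1) : ℝ) = 2*(2*(p:ℝ)+1)*((2*p).choose p : ℝ) / ((p:ℝ)+1) := by
        rw [eq_div_iff hp1]; linarith [hA2]
      have hB'd : ((2*q+2).choose (q+1) : ℝ) = 2*(2*(q:ℝ)+1)*((2*q).choose q : ℝ) / ((q:ℝ)+1) := by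
        rw [eq_div_iff hq1]; linarith [hB2]
      have hC1d : ((p+q+1).choose (p+1) : ℝ) = ((p:ℝ)+(q:ℝ)+1)*((p+q).choose p : ℝ) / ((p:ℝ)+1) := by
        rw [eq_div_iff hp1]; linarith [hC1]
      have hC2d : ((p+q+1).choose p : ℝ) = ((p:ℝ)+(q:ℝ)+1)*((p+q).choose p : ℝ) / ((q:ℝ)+1) := by
        rw [eq_div_iff hq1]; linarith [hC2]
      rw [hA'd, hB'd, hC1d, hC2d]
      rw [pow_succ]
      field_simp
      ring


lemma choose_mul' (N i t : ℕ) :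
    N.choose (i+t) * (i+t).choose i = N.choose i * (N-i).choose t := by
  rcases le_or_gt (i+t) N with h | h
  · rw [Nat.choose_mul (n := N) (Nat.le_add_right i t), Nat.add_sub_cancel_left]
  · rw [Nat.choose_eq_zero_of_lt h, Nat.zero_mul]
    rcases le_or_gt i N with h2 | h2
    · rw [Nat.choose_eq_zero_of_lt (by omega : N - i < t), Nat.mul_zero]
    · rw [Nat.choose_eq_zero_of_lt h2, Nat.zero_mul]

lemma trinom (m n : ℕ) (h : n ≤ m) :
    ((m+n).choose (2*n) : ℝ) * ((2*n).choose n : ℝ) = ((m+n).choose n : ℝ) * (m.choose n : ℝ) := by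
  have := Nat.choose_mul (n := m+n) (k := 2*n) (show n ≤ 2*n by omega)
  have e1 : m+n-n = m := by omega
  have e2 : 2*n-n = n := by omega
  rw [e1, e2] at this
  exact_mod_cast congrArg (Nat.cast : ℕ → ℝ) this

noncomputable def Phi (m : ℕ) (y : ℝ) (n : ℕ) : ℝ :=
  y^n * ((8:ℝ)⁻¹)^n * (((2*(m-n)).choose (m-n) : ℝ) * ((2*n).choose n : ℝ)
      / (4^(m-n) * (((m-n)+n).choose (m-n) : ℝ)))

theorem boros_moll_double_sum (m : ℕ) (a : ℝ) :
    ∑ j ∈ Finset.range (m + 1), ∑ k ∈ Finset.range (m + 1),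
        (Nat.choose (2 * m + 1) (2 * j) : ℝ) * (Nat.choose (m - j) k : ℝ) *
          (Nat.choose (2 * k + 2 * j) (k + j) : ℝ) * (a + 1) ^ j * (a - 1) ^ k / 2 ^ (3 * (k + j))
      = ((2 : ℝ) ^ (2 * m))⁻¹ * ∑ k ∈ Finset.range (m + 1),
          2 ^ k * (Nat.choose (2 * m - 2 * k) (m - k) : ℝ) * (Nat.choose (m + k) k : ℝ) *
            (a + 1) ^ k := by
  set y : ℝ := a + 1 with hy
  -- Step 1: rewrite each term, expanding (a-1)^k and the power of 2
  have step1 : ∀ j ∈ range (m+1), ∀ k ∈ range (m+1),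
      (Nat.choose (2 * m + 1) (2 * j) : ℝ) * (Nat.choose (m - j) k : ℝ) *
          (Nat.choose (2 * k + 2 * j) (k + j) : ℝ) * y ^ j * (a - 1) ^ k / 2 ^ (3 * (k + j))
      = ∑ i ∈ range (m+1),
          ((2*m+1).choose (2*j) : ℝ) * ((m-j).choose k : ℝ) * ((k).choose i : ℝ)
            * ((2*k+2*j).choose (k+j) : ℝ) * y^(j+i) * (-2)^(k-i) * ((8:ℝ)⁻¹)^(k+j) := by
    intro j hj k hk
    rw [mem_range] at hj hk
    have hpow : (2:ℝ) ^ (3*(k+j)) = 8^(k+j) := by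
      rw [pow_mul]; norm_num
    have hexp : (a-1)^k = ∑ i ∈ range (k+1), y^i * (-2:ℝ)^(k-i) * ((k).choose i : ℝ) := by
      have : a - 1 = y + (-2) := by rw [hy]; ring
      rw [this, add_pow]
    rw [hpow, hexp, div_eq_mul_inv, ← inv_pow]
    rw [Finset.mul_sum, Finset.sum_mul]
    rw [Finset.sum_subset (Finset.range_subset_range.2 (by omega : k+1 ≤ m+1))]
    · apply sum_congr rfl
      intro i hi
      rw [pow_add]
      ring
    · intro i hi1 hi2
      rw [mem_range] at hi1; rw [mem_range] at hi2
      rw [Nat.choose_eq_zero_of_lt (by omega : k < i)]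
      push_cast
      ring
  rw [Finset.sum_congr rfl (fun j hj => Finset.sum_congr rfl (fun k hk => step1 j hj k hk))]
  -- Step 2: swap k and i sums
  rw [Finset.sum_congr rfl (fun j _ => Finset.sum_comm (s := range (m+1)) (t := range (m+1)))]
  -- Step 3: for fixed j, i: evaluate the k-sum
  have step3 : ∀ j ∈ range (m+1), ∀ i ∈ range (m+1),
      ∑ k ∈ range (m+1),
          ((2*m+1).choose (2*j) : ℝ) * ((m-j).choose k : ℝ) * ((k).choose i : ℝ)
            * ((2*k+2*j).choose (k+j) : ℝ) * y^(j+i) * (-2)^(k-i) * ((8:ℝ)⁻¹)^(k+j)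
      = ((2*m+1).choose (2*j) : ℝ) * ((m-j).choose i : ℝ) * y^(j+i) * ((8:ℝ)⁻¹)^(i+j)
          * Iq ((m-j)-i) (i+j) := by
    intro j hj i hi
    rw [mem_range] at hj hi
    -- drop k < i terms
    have drop : ∑ k ∈ range (m+1),
          ((2*m+1).choose (2*j) : ℝ) * ((m-j).choose k : ℝ) * ((k).choose i : ℝ)
            * ((2*k+2*j).choose (k+j) : ℝ) * y^(j+i) * (-2)^(k-i) * ((8:ℝ)⁻¹)^(k+j)
        = ∑ k ∈ Finset.Ico i (m+1),
          ((2*m+1).choose (2*j) : ℝ) * ((m-j).choose k : ℝ) * ((k).choose i : ℝ)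
            * ((2*k+2*j).choose (k+j) : ℝ) * y^(j+i) * (-2)^(k-i) * ((8:ℝ)⁻¹)^(k+j) := by
      rw [range_eq_Ico, ← Finset.sum_Ico_consecutive _ (Nat.zero_le i) (by omega : i ≤ m+1)]
      have z : ∑ k ∈ Finset.Ico 0 i,
          ((2*m+1).choose (2*j) : ℝ) * ((m-j).choose k : ℝ) * ((k).choose i : ℝ)
            * ((2*k+2*j).choose (k+j) : ℝ) * y^(j+i) * (-2)^(k-i) * ((8:ℝ)⁻¹)^(k+j) = 0 := by
        apply Finset.sum_eq_zero
        intro k hk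
        rw [Finset.mem_Ico] at hk
        rw [Nat.choose_eq_zero_of_lt (by omega : k < i)]
        push_cast; ring
      rw [z, zero_add]
    rw [drop, Finset.sum_Ico_eq_sum_range]
    have shift : ∀ t ∈ range (m+1-i),
        ((2*m+1).choose (2*j) : ℝ) * ((m-j).choose (i+t) : ℝ) * ((i+t).choose i : ℝ)
            * ((2*(i+t)+2*j).choose ((i+t)+j) : ℝ) * y^(j+i) * (-2)^((i+t)-i) * ((8:ℝ)⁻¹)^((i+t)+j)
        = (((2*m+1).choose (2*j) : ℝ) * ((m-j).choose i : ℝ) * y^(j+i) * ((8:ℝ)⁻¹)^(i+j))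
          * ((((m-j)-i).choose t : ℝ) * (-1)^t * ((4:ℝ)⁻¹)^t * ((2*t+2*(i+j)).choose (t+(i+j)) : ℝ)) := by
      intro t ht
      have hcm : ((m-j).choose (i+t) : ℝ) * ((i+t).choose i : ℝ)
          = ((m-j).choose i : ℝ) * (((m-j)-i).choose t : ℝ) := by
        exact_mod_cast congrArg (Nat.cast : ℕ → ℝ) (choose_mul' (m-j) i t)
      have e1 : (i+t)-i = t := by omega
      have e2 : 2*(i+t)+2*j = 2*t+2*(i+j) := by omega
      have e3 : (i+t)+j = t+(i+j) := by omega
      have e4 : ((8:ℝ)⁻¹)^((i+t)+j) = ((8:ℝ)⁻¹)^(i+j) * ((8:ℝ)⁻¹)^t := by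
        rw [← pow_add]; congr 1; omega
      have e5 : (-2:ℝ)^t * ((8:ℝ)⁻¹)^t = (-1)^t * ((4:ℝ)⁻¹)^t := by
        rw [← mul_pow, ← mul_pow]; norm_num
      calc ((2*m+1).choose (2*j) : ℝ) * ((m-j).choose (i+t) : ℝ) * ((i+t).choose i : ℝ)
            * ((2*(i+t)+2*j).choose ((i+t)+j) : ℝ) * y^(j+i) * (-2)^((i+t)-i) * ((8:ℝ)⁻¹)^((i+t)+j)
          = ((2*m+1).choose (2*j) : ℝ) * (((m-j).choose (i+t) : ℝ) * ((i+t).choose i : ℝ))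
            * ((2*t+2*(i+j)).choose (t+(i+j)) : ℝ) * y^(j+i)
            * ((-2:ℝ)^t * ((8:ℝ)⁻¹)^t) * ((8:ℝ)⁻¹)^(i+j) := by
            rw [e1, e2, e4, e3]; ring
        _ = _ := by
            rw [hcm, e5]; ring
    rw [Finset.sum_congr rfl shift, ← Finset.mul_sum]
    -- now match the t-sum with Iq ((m-j)-i) (i+j)
    rcases le_or_gt i (m-j) with hle | hlt
    · congr 1
      rw [Iq]
      refine (Finset.sum_subset (Finset.range_subset_range.2 (by omega : (m-j)-i+1 ≤ m+1-i)) ?_).symm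
      intro t ht1 ht2
      rw [mem_range] at ht1; rw [mem_range] at ht2
      rw [Nat.choose_eq_zero_of_lt (by omega : (m-j)-i < t)]
      push_cast; ring
    · have hz : ((m-j).choose i : ℝ) = 0 := by
        rw [Nat.choose_eq_zero_of_lt hlt]; norm_num
      rw [hz]
      ring
  rw [Finset.sum_congr rfl (fun j hj => Finset.sum_congr rfl (fun i hi => step3 j hj i hi))]
  -- Step 4: replace Iq by closed form, uniformize to n-dependence
  have step4 : ∀ j ∈ range (m+1), ∀ i ∈ range (m+1),
      ((2*m+1).choose (2*j) : ℝ) * ((m-j).choose i : ℝ) * y^(j+i) * ((8:ℝ)⁻¹)^(i+j)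
          * Iq ((m-j)-i) (i+j)
      = ((2*m+1).choose (2*j) : ℝ) * ((m-j).choose i : ℝ) * Phi m y (i+j) := by
    intro j hj i hi
    rw [mem_range] at hj hi
    rw [Phi]
    rcases le_or_gt (i+j) m with hle | hlt
    · rcases le_or_gt i (m-j) with hle2 | hlt2
      · rw [lemB]
        have e : (m-j)-i = m-(i+j) := by omega
        rw [e, show j+i = i+j by omega]
        ring
      · rw [Nat.choose_eq_zero_of_lt hlt2]
        push_cast; ring
    · have : m - j < i := by omega
      rw [Nat.choose_eq_zero_of_lt this]
      push_cast; ring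
  rw [Finset.sum_congr rfl (fun j hj => Finset.sum_congr rfl (fun i hi => step4 j hj i hi))]
  -- Step 5: reindex (j,i) -> (j,n) with n = i+j
  have step5 : ∀ j ∈ range (m+1),
      ∑ i ∈ range (m+1), ((2*m+1).choose (2*j) : ℝ) * ((m-j).choose i : ℝ) * Phi m y (i+j)
      = ∑ n ∈ range (m+1), (if j ≤ n then
          ((2*m+1).choose (2*j) : ℝ) * ((m-j).choose (n-j) : ℝ) * Phi m y ((n-j)+j) else 0) := by
    intro j hj
    rw [mem_range] at hj
    calc ∑ i ∈ range (m+1), ((2*m+1).choose (2*j) : ℝ) * ((m-j).choose i : ℝ) * Phi m y (i+j)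
        = ∑ i ∈ range (m+1-j), ((2*m+1).choose (2*j) : ℝ) * ((m-j).choose i : ℝ) * Phi m y (i+j) := by
          refine (Finset.sum_subset (Finset.range_subset_range.2 (by omega : m+1-j ≤ m+1)) ?_).symm
          intro i hi1 hi2
          rw [mem_range] at hi1; rw [mem_range] at hi2
          rw [Nat.choose_eq_zero_of_lt (by omega : m-j < i)]
          push_cast; ring
      _ = ∑ n ∈ Finset.Ico j (m+1),
            ((2*m+1).choose (2*j) : ℝ) * ((m-j).choose (n-j) : ℝ) * Phi m y ((n-j)+j) := by
          rw [Finset.sum_Ico_eq_sum_range]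
          apply sum_congr rfl
          intro t _
          rw [Nat.add_sub_cancel_left]
      _ = ∑ n ∈ range (m+1), (if j ≤ n then
            ((2*m+1).choose (2*j) : ℝ) * ((m-j).choose (n-j) : ℝ) * Phi m y ((n-j)+j) else 0) := by
          rw [← Finset.sum_filter]
          congr 1
          ext n
          simp only [Finset.mem_Ico, Finset.mem_filter, Finset.mem_range]
          omega
  rw [Finset.sum_congr rfl step5]
  rw [Finset.sum_comm]
  -- Step 6: evaluate the j-sum for each n, and match the RHS term
  rw [Finset.mul_sum]
  apply Finset.sum_congr rfl
  intro n hn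
  rw [mem_range] at hn
  have hnm : n ≤ m := by omega
  calc ∑ j ∈ range (m+1), (if j ≤ n then
          ((2*m+1).choose (2*j) : ℝ) * ((m-j).choose (n-j) : ℝ) * Phi m y ((n-j)+j) else 0)
      = ∑ j ∈ range (n+1),
          ((2*m+1).choose (2*j) : ℝ) * ((m-j).choose (n-j) : ℝ) * Phi m y n := by
        refine (Finset.sum_subset (Finset.range_subset_range.2 (by omega : n+1 ≤ m+1)) ?_).symm.trans ?_
        · intro j hj1 hj2
          rw [mem_range] at hj1; rw [mem_range] at hj2
          rw [if_neg (by omega)]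
        · apply sum_congr rfl
          intro j hj
          rw [mem_range] at hj
          rw [if_pos (by omega : j ≤ n), show (n-j)+j = n from by omega]
    _ = (∑ j ∈ range (n+1),
          ((2*m+1).choose (2*j) : ℝ) * ((m-j).choose (n-j) : ℝ)) * Phi m y n := by
        rw [Finset.sum_mul]
    _ = (4^n * ((m+n).choose (2*n) : ℝ)) * Phi m y n := by rw [lemA m n hnm]
    _ = ((2:ℝ)^(2*m))⁻¹ * (2 ^ n * ((2*m-2*n).choose (m-n) : ℝ) * ((m+n).choose n : ℝ) * y ^ n) := by
        rw [Phi]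
        have e1 : (m-n)+n = m := by omega
        have e2 : 2*m-2*n = 2*(m-n) := by omega
        have e3 : (m.choose (m-n) : ℝ) = (m.choose n : ℝ) := by
          exact_mod_cast congrArg (Nat.cast : ℕ → ℝ) (by
            rw [← Nat.choose_symm hnm] : m.choose (m-n) = m.choose n)
        rw [e1, e2, e3]
        have htri := trinom m n hnm
        set T := (2:ℝ)^n with hT
        set M := (2:ℝ)^m with hM
        have hT0 : T ≠ 0 := by positivity
        have hM0 : M ≠ 0 := by positivity
        have hCmn : (m.choose n : ℝ) ≠ 0 := by
          have := Nat.choose_pos hnm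
          positivity
        have f8 : ((8:ℝ)⁻¹)^n = (T^3)⁻¹ := by
          rw [inv_pow, hT, ← pow_mul, show (8:ℝ) = 2^3 from by norm_num, ← pow_mul]
          rw [Nat.mul_comm]
        have f4n : (4:ℝ)^n = T^2 := by
          rw [hT, ← pow_mul, show (4:ℝ) = 2^2 from by norm_num, ← pow_mul]
          rw [Nat.mul_comm]
        have f2m : ((2:ℝ)^(2*m))⁻¹ = (M^2)⁻¹ := by
          rw [hM, ← pow_mul, Nat.mul_comm]
        have f4mn : (4:ℝ)^(m-n) = M^2 / T^2 := by
          rw [eq_div_iff (by positivity : T^2 ≠ 0), ← f4n, ← pow_add,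
            hM, ← pow_mul, show (4:ℝ) = 2^2 from by norm_num, ← pow_mul]
          congr 1
          omega
        rw [f8, f4n, f2m, f4mn]
        field_simp
        ring_nf
        ring_nf at htri
        linear_combination (((((m-n)*2).choose (m-n) : ℕ) : ℝ) * y^n) * htri
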